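/- Let M be a finitely generated ℕ²-graded module over S = K[x_1,x_2]. Suppose there exist natural numbers m_1, m_2, an integer C, integers α_0,…,α_{m_1−1} and β_0,…,β_{m_2−1}, and a polynomial R ∈ ℤ[t_1,t_2] such that, as an identity of formal power series, HS(M,t) = C·t_1^{m_1}t_2^{m_2}/((1−t_1)(1−t_2)) + Σ_{i=0}^{m_1−1} α_i·t_1^i/(1−t_2) + Σ_{j=0}^{m_2−1} β_j·t_2^j/(1−t_1) + R(t_1,t_2). Then C = rk_S(M). -/

import Mathlib

/-- The rank of a module `M` over an integral domain `R`:
`rk_R(M) = dim_Q (M ⊗_R Q)` where `Q` is the fraction field of `R`. -/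
noncomputable def rk (R : Type) [CommRing R] (M : Type) [AddCommGroup M] [Module R M] : ℕ :=
  Module.finrank (FractionRing R) (TensorProduct R (FractionRing R) M)

set_option linter.unusedSectionVars false

open MvPowerSeries Finset DirectSum

namespace St5


/-- the exponent `(n, k)` as a `Fin 2 →₀ ℕ`. -/
noncomputable def fs (n k : ℕ) : Fin 2 →₀ ℕ := Finsupp.single 0 n + Finsupp.single 1 k

@[simp] lemma fs_apply0 (n k : ℕ) : fs n k 0 = n := by
  simp [fs, Finsupp.single_apply]

@[simp] lemma fs_apply1 (n k : ℕ) : fs n k 1 = k := by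
  simp [fs, Finsupp.single_apply]

lemma fs_eta (d : Fin 2 →₀ ℕ) : d = fs (d 0) (d 1) := by
  ext i
  fin_cases i
  · simp
  · simp

lemma fs_inj {a b n k : ℕ} : fs a b = fs n k ↔ a = n ∧ b = k := by
  constructor
  · intro h
    constructor
    · have := congrArg (fun f => f 0) h; simpa using this
    · have := congrArg (fun f => f 1) h; simpa using this
  · rintro ⟨rfl, rfl⟩; rfl

/-- rectangle sum of coefficients -/
noncomputable def Ψ (F : MvPowerSeries (Fin 2) ℤ) (u v : ℕ) : ℤ :=
  ∑ a ∈ range u, ∑ b ∈ range v, MvPowerSeries.coeff (R := ℤ) (fs a b) F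

lemma Ψ_add (F G : MvPowerSeries (Fin 2) ℤ) (u v : ℕ) :
    Ψ (F + G) u v = Ψ F u v + Ψ G u v := by
  simp [Ψ, map_add, Finset.sum_add_distrib]

lemma Ψ_sub (F G : MvPowerSeries (Fin 2) ℤ) (u v : ℕ) :
    Ψ (F - G) u v = Ψ F u v - Ψ G u v := by
  simp [Ψ, map_sub, Finset.sum_sub_distrib]

lemma coeff_X0_mul (F : MvPowerSeries (Fin 2) ℤ) (a b : ℕ) :
    MvPowerSeries.coeff (R := ℤ) (fs a b) (X 0 * F) =
      if a = 0 then 0 else MvPowerSeries.coeff (R := ℤ) (fs (a-1) b) F := by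
  rw [X, coeff_monomial_mul]
  rcases Nat.eq_zero_or_pos a with h | h
  · subst h
    rw [if_neg, if_pos rfl]
    intro hle
    have := hle 0
    simp at this
  · have hsub : fs a b - Finsupp.single 0 1 = fs (a-1) b := by
      ext i
      fin_cases i
      · simp [fs, Finsupp.single_apply]
      · simp [fs, Finsupp.single_apply]
    have hle : Finsupp.single 0 1 ≤ fs a b := by
      rw [Finsupp.le_def]
      intro i
      fin_cases i
      · simpa [Finsupp.single_apply] using Nat.succ_le_of_lt h
      · simp [Finsupp.single_apply]
    rw [if_pos hle, if_neg (by omega), hsub, one_mul]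

lemma coeff_X1_mul (F : MvPowerSeries (Fin 2) ℤ) (a b : ℕ) :
    MvPowerSeries.coeff (R := ℤ) (fs a b) (X 1 * F) =
      if b = 0 then 0 else MvPowerSeries.coeff (R := ℤ) (fs a (b-1)) F := by
  rw [X, coeff_monomial_mul]
  rcases Nat.eq_zero_or_pos b with h | h
  · subst h
    rw [if_neg, if_pos rfl]
    intro hle
    have := hle 1
    simp at this
  · have hsub : fs a b - Finsupp.single 1 1 = fs a (b-1) := by
      ext i
      fin_cases i
      · simp [fs, Finsupp.single_apply]
      · simp [fs, Finsupp.single_apply]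
    have hle : Finsupp.single 1 1 ≤ fs a b := by
      rw [Finsupp.le_def]
      intro i
      fin_cases i
      · simp [Finsupp.single_apply]
      · simpa [Finsupp.single_apply] using Nat.succ_le_of_lt h
    rw [if_pos hle, if_neg (by omega), hsub, one_mul]

lemma Ψ_X0_mul (F : MvPowerSeries (Fin 2) ℤ) (n v : ℕ) :
    Ψ (X 0 * F) (n+1) v = Ψ F n v := by
  unfold Ψ
  rw [Finset.sum_range_succ']
  simp only [coeff_X0_mul]
  simp

lemma Ψ_one_sub_X0_mul (F : MvPowerSeries (Fin 2) ℤ) (n v : ℕ) :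
    Ψ ((1 - X 0) * F) (n+1) v = ∑ b ∈ range v, MvPowerSeries.coeff (R := ℤ) (fs n b) F := by
  rw [sub_mul, one_mul, Ψ_sub, Ψ_X0_mul]
  unfold Ψ
  rw [Finset.sum_range_succ]
  ring

lemma row_one_sub_X1_mul (F : MvPowerSeries (Fin 2) ℤ) (a k : ℕ) :
    ∑ b ∈ range (k+1), MvPowerSeries.coeff (R := ℤ) (fs a b) ((1 - X 1) * F) =
      MvPowerSeries.coeff (R := ℤ) (fs a k) F := by
  have : ∀ b, MvPowerSeries.coeff (R := ℤ) (fs a b) ((1 - X 1) * F)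
      = MvPowerSeries.coeff (R := ℤ) (fs a b) F -
        (if b = 0 then 0 else MvPowerSeries.coeff (R := ℤ) (fs a (b-1)) F) := by
    intro b
    rw [sub_mul, one_mul, map_sub, coeff_X1_mul]
  simp only [this]
  rw [Finset.sum_sub_distrib, Finset.sum_range_succ' (fun b => if b = 0 then 0 else
    MvPowerSeries.coeff (R := ℤ) (fs a (b-1)) F)]
  simp [Finset.sum_range_succ]

lemma Ψ_main (F : MvPowerSeries (Fin 2) ℤ) (n k : ℕ) :
    Ψ ((1 - X 0) * (1 - X 1) * F) (n+1) (k+1) = MvPowerSeries.coeff (R := ℤ) (fs n k) F := by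
  rw [mul_assoc, Ψ_one_sub_X0_mul, row_one_sub_X1_mul]



lemma Ψ_X1_mul (F : MvPowerSeries (Fin 2) ℤ) (u k : ℕ) :
    Ψ (X 1 * F) u (k+1) = Ψ F u k := by
  unfold Ψ
  apply Finset.sum_congr rfl
  intro a _
  rw [Finset.sum_range_succ']
  simp only [coeff_X1_mul]
  simp

lemma Ψ_one_sub_X1_mul (F : MvPowerSeries (Fin 2) ℤ) (u k : ℕ) :
    Ψ ((1 - X 1) * F) u (k+1) = ∑ a ∈ range u, MvPowerSeries.coeff (R := ℤ) (fs a k) F := by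
  rw [sub_mul, one_mul, Ψ_sub, Ψ_X1_mul]
  unfold Ψ
  rw [← Finset.sum_sub_distrib]
  apply Finset.sum_congr rfl
  intro a _
  rw [Finset.sum_range_succ]
  ring

lemma term1_eq (c : ℤ) (m₁ m₂ : ℕ) :
    MvPowerSeries.C (σ := Fin 2) (R := ℤ) c * (X 0) ^ m₁ * (X 1) ^ m₂
      = MvPowerSeries.monomial (R := ℤ) (fs m₁ m₂) c := by
  rw [show MvPowerSeries.C (σ := Fin 2) (R := ℤ) c = MvPowerSeries.monomial (R := ℤ) 0 c from rfl,
    X_pow_eq, X_pow_eq, monomial_mul_monomial, monomial_mul_monomial]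
  simp [fs]

lemma Ψ_term1 (c : ℤ) (m₁ m₂ n k : ℕ) (hn : m₁ ≤ n) (hk : m₂ ≤ k) :
    Ψ (MvPowerSeries.C (σ := Fin 2) (R := ℤ) c * (X 0) ^ m₁ * (X 1) ^ m₂) (n+1) (k+1) = c := by
  rw [term1_eq]
  unfold Ψ
  have : ∀ a b : ℕ, MvPowerSeries.coeff (R := ℤ) (fs a b) (MvPowerSeries.monomial (R := ℤ) (fs m₁ m₂) c)
      = if a = m₁ then (if b = m₂ then c else 0) else 0 := by
    intro a b
    rw [coeff_monomial]
    by_cases h1 : a = m₁ <;> by_cases h2 : b = m₂ <;>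
      simp [h1, h2, fs_inj]
  simp only [this]
  have inner : ∀ a : ℕ, (∑ b ∈ range (k+1), if a = m₁ then (if b = m₂ then c else 0) else 0)
      = if a = m₁ then c else 0 := by
    intro a
    by_cases ha : a = m₁
    · subst ha
      simp only [if_true]
      rw [Finset.sum_ite_eq' (range (k+1)) m₂ (fun _ => c)]
      simp [Nat.lt_succ_of_le hk]
    · simp [ha]
  simp only [inner]
  rw [Finset.sum_ite_eq' (range (n+1)) m₁ (fun _ => c)]
  simp [Nat.lt_succ_of_le hn]

lemma Ψ_term2 (α : ℕ → ℤ) (m₁ n k : ℕ) (hn : m₁ ≤ n) :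
    Ψ ((1 - X 0) *
      (∑ i ∈ Finset.range m₁, MvPowerSeries.C (σ := Fin 2) (R := ℤ) (α i) * (X 0) ^ i)) (n+1) (k+1) = 0 := by
  rw [Ψ_one_sub_X0_mul]
  apply Finset.sum_eq_zero
  intro b _
  rw [map_sum]
  apply Finset.sum_eq_zero
  intro i hi
  have : MvPowerSeries.C (σ := Fin 2) (R := ℤ) (α i) * (X 0 : MvPowerSeries (Fin 2) ℤ) ^ i
      = MvPowerSeries.monomial (R := ℤ) (Finsupp.single 0 i) (α i) := by
    rw [show MvPowerSeries.C (σ := Fin 2) (R := ℤ) (α i) = MvPowerSeries.monomial (R := ℤ) 0 (α i) from rfl,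
      X_pow_eq, monomial_mul_monomial]
    simp
  rw [this, coeff_monomial, if_neg]
  intro h
  have := congrArg (fun f => f 0) h
  simp [Finsupp.single_apply] at this
  rw [Finset.mem_range] at hi
  omega

lemma Ψ_term3 (β : ℕ → ℤ) (m₂ n k : ℕ) (hk : m₂ ≤ k) :
    Ψ ((1 - X 1) *
      (∑ j ∈ Finset.range m₂, MvPowerSeries.C (σ := Fin 2) (R := ℤ) (β j) * (X 1) ^ j)) (n+1) (k+1) = 0 := by
  rw [Ψ_one_sub_X1_mul]
  apply Finset.sum_eq_zero
  intro a _
  rw [map_sum]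
  apply Finset.sum_eq_zero
  intro j hj
  have : MvPowerSeries.C (σ := Fin 2) (R := ℤ) (β j) * (X 1 : MvPowerSeries (Fin 2) ℤ) ^ j
      = MvPowerSeries.monomial (R := ℤ) (Finsupp.single 1 j) (β j) := by
    rw [show MvPowerSeries.C (σ := Fin 2) (R := ℤ) (β j) = MvPowerSeries.monomial (R := ℤ) 0 (β j) from rfl,
      X_pow_eq, monomial_mul_monomial]
    simp
  rw [this, coeff_monomial, if_neg]
  intro h
  have := congrArg (fun f => f 1) h
  simp [Finsupp.single_apply] at this
  rw [Finset.mem_range] at hj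
  omega

lemma Ψ_term4 (R : MvPolynomial (Fin 2) ℤ) (n k : ℕ) (hn : R.totalDegree < n) :
    Ψ ((1 - X 0) * (1 - X 1) * (R : MvPowerSeries (Fin 2) ℤ)) (n+1) (k+1) = 0 := by
  rw [Ψ_main, MvPolynomial.coeff_coe]
  apply MvPolynomial.coeff_eq_zero_of_totalDegree_lt
  have h0 : (fs n k) 0 = n := fs_apply0 n k
  have hmem : (0 : Fin 2) ∈ (fs n k).support := by
    rw [Finsupp.mem_support_iff, h0]
    omega
  calc R.totalDegree < n := hn
    _ = (fs n k) 0 := h0.symm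
    _ ≤ ∑ i ∈ (fs n k).support, (fs n k) i := Finset.single_le_sum (fun _ _ => Nat.zero_le _) hmem

lemma part1 (HS : MvPowerSeries (Fin 2) ℤ) (m₁ m₂ : ℕ) (c : ℤ) (α β : ℕ → ℤ)
    (R : MvPolynomial (Fin 2) ℤ)
    (heq : (1 - MvPowerSeries.X 0) * (1 - MvPowerSeries.X 1) * HS =
        MvPowerSeries.C (σ := Fin 2) (R := ℤ) c * (MvPowerSeries.X 0) ^ m₁ * (MvPowerSeries.X 1) ^ m₂
      + (1 - MvPowerSeries.X 0) *
          (∑ i ∈ Finset.range m₁, MvPowerSeries.C (σ := Fin 2) (R := ℤ) (α i) * (MvPowerSeries.X 0) ^ i)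
      + (1 - MvPowerSeries.X 1) *
          (∑ j ∈ Finset.range m₂, MvPowerSeries.C (σ := Fin 2) (R := ℤ) (β j) * (MvPowerSeries.X 1) ^ j)
      + (1 - MvPowerSeries.X 0) * (1 - MvPowerSeries.X 1) * (R : MvPowerSeries (Fin 2) ℤ))
    (n k : ℕ) (hn : m₁ ≤ n) (hk : m₂ ≤ k) (hn' : R.totalDegree < n) (_hk' : R.totalDegree < k) :
    MvPowerSeries.coeff (R := ℤ) (fs n k) HS = c := by
  have h := congrArg (fun F => Ψ F (n+1) (k+1)) heq
  rw [Ψ_main, Ψ_add, Ψ_add, Ψ_add, Ψ_term1 c m₁ m₂ n k hn hk, Ψ_term2 α m₁ n k hn,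
    Ψ_term3 β m₂ n k hk, Ψ_term4 R n k hn'] at h
  simpa using h



section Grading

variable {K : Type} [Field K] {M : Type} [AddCommGroup M]
  [Module (MvPolynomial (Fin 2) K) M] [Module K M]
  [IsScalarTower K (MvPolynomial (Fin 2) K) M]
  (ℳ : (Fin 2 →₀ ℕ) → Submodule K M)
  [DirectSum.Decomposition ℳ]

/-- projection onto the degree `d` component, as a map `M → M`. -/
noncomputable def π (d : Fin 2 →₀ ℕ) (m : M) : M := (DirectSum.decompose ℳ m d : M)

lemma π_mem (d : Fin 2 →₀ ℕ) (m : M) : π ℳ d m ∈ ℳ d := (DirectSum.decompose ℳ m d).2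

lemma π_of_mem_same {d : Fin 2 →₀ ℕ} {m : M} (h : m ∈ ℳ d) : π ℳ d m = m :=
  DirectSum.decompose_of_mem_same ℳ h

lemma π_of_mem_ne {d e : Fin 2 →₀ ℕ} {m : M} (h : m ∈ ℳ e) (hne : e ≠ d) : π ℳ d m = 0 :=
  DirectSum.decompose_of_mem_ne ℳ h hne

lemma π_add (d : Fin 2 →₀ ℕ) (m m' : M) : π ℳ d (m + m') = π ℳ d m + π ℳ d m' := by
  unfold π
  rw [DirectSum.decompose_add]
  rfl

lemma π_zero (d : Fin 2 →₀ ℕ) : π ℳ d (0 : M) = 0 := by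
  unfold π
  rw [DirectSum.decompose_zero]
  rfl

lemma π_smul (d : Fin 2 →₀ ℕ) (c : K) (m : M) : π ℳ d (c • m) = c • π ℳ d m := by
  unfold π
  rw [DirectSum.decompose_smul]
  rfl

lemma π_sum {ι : Type*} (s : Finset ι) (f : ι → M) (d : Fin 2 →₀ ℕ) :
    π ℳ d (∑ i ∈ s, f i) = ∑ i ∈ s, π ℳ d (f i) := by
  classical
  induction s using Finset.induction with
  | empty => simp [π_zero]
  | insert _ _ h ih => rw [Finset.sum_insert h, Finset.sum_insert h, π_add, ih]

lemma sum_π (m : M) : ∃ D : Finset (Fin 2 →₀ ℕ), ∑ d ∈ D, π ℳ d m = m := by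
  classical
  exact ⟨(DirectSum.decompose ℳ m).support, DirectSum.sum_support_decompose ℳ m⟩

lemma degree_unique {d e : Fin 2 →₀ ℕ} {m : M} (hd : m ∈ ℳ d) (he : m ∈ ℳ e) (hne : d ≠ e) :
    m = 0 := by
  have h1 := π_of_mem_same ℳ hd
  have h2 := π_of_mem_ne ℳ he (Ne.symm hne)
  rw [h1] at h2
  exact h2

variable (hMgr : ∀ (u v : Fin 2 →₀ ℕ) (c : K) (m : M), m ∈ ℳ v →
      (MvPolynomial.monomial u c) • m ∈ ℳ (u + v))

include hMgr

lemma π_monomial_smul_of_le {ν e : Fin 2 →₀ ℕ} (h : ν ≤ e) (c : K) (m : M) :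
    π ℳ e ((MvPolynomial.monomial ν c) • m) = (MvPolynomial.monomial ν c) • π ℳ (e - ν) m := by
  induction m using DirectSum.Decomposition.inductionOn ℳ with
  | zero => rw [smul_zero, π_zero, π_zero, smul_zero]
  | @homogeneous d m =>
    have hm : (m : M) ∈ ℳ d := m.2
    have hsm : (MvPolynomial.monomial ν c) • (m : M) ∈ ℳ (ν + d) := hMgr ν d c m hm
    by_cases hde : e = ν + d
    · subst hde
      rw [π_of_mem_same ℳ hsm, add_tsub_cancel_left, π_of_mem_same ℳ hm]
    · rw [π_of_mem_ne ℳ hsm (Ne.symm hde)]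
      have : e - ν ≠ d := by
        intro hc
        exact hde (by rw [← hc, add_tsub_cancel_of_le h])
      rw [π_of_mem_ne ℳ hm (Ne.symm this), smul_zero]
  | add m m' ihm ihm' =>
    rw [smul_add, π_add, π_add, ihm, ihm', smul_add]

lemma π_monomial_smul_of_not_le {ν e : Fin 2 →₀ ℕ} (h : ¬ ν ≤ e) (c : K) (m : M) :
    π ℳ e ((MvPolynomial.monomial ν c) • m) = 0 := by
  induction m using DirectSum.Decomposition.inductionOn ℳ with
  | zero => rw [smul_zero, π_zero]
  | @homogeneous d m =>
    have hsm : (MvPolynomial.monomial ν c) • (m : M) ∈ ℳ (ν + d) := hMgr ν d c m m.2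
    apply π_of_mem_ne ℳ hsm
    intro hc
    apply h
    rw [← hc]
    exact le_add_right le_rfl
  | add m m' ihm ihm' =>
    rw [smul_add, π_add, ihm, ihm', add_zero]


omit hMgr in
lemma monomial_smul_eq (μ : Fin 2 →₀ ℕ) (c : K) (h : M) :
    (MvPolynomial.monomial μ c) • h = c • ((MvPolynomial.monomial μ (1:K)) • h) := by
  rw [show (MvPolynomial.monomial μ c : MvPolynomial (Fin 2) K)
      = MvPolynomial.C c * MvPolynomial.monomial μ 1 by
        rw [MvPolynomial.C_mul_monomial, mul_one],
    mul_smul, ← MvPolynomial.algebraMap_eq, algebraMap_smul]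

omit hMgr in
/-- monomial-smul of a generator-span element stays in the matching span. -/
lemma smul_genspan (H : Set M) (ν : Fin 2 →₀ ℕ) (c : K) (e' : Fin 2 →₀ ℕ) {x : M}
    (hx : x ∈ Submodule.span K
      {y : M | ∃ h d μ, h ∈ H ∧ h ∈ ℳ d ∧ μ + d = e' ∧ y = (MvPolynomial.monomial μ (1:K)) • h}) :
    (MvPolynomial.monomial ν c) • x ∈ Submodule.span K
      {y : M | ∃ h d μ, h ∈ H ∧ h ∈ ℳ d ∧ μ + d = ν + e' ∧
        y = (MvPolynomial.monomial μ (1:K)) • h} := by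
  set T : M →ₗ[K] M :=
    LinearMap.restrictScalars K (LinearMap.lsmul (MvPolynomial (Fin 2) K) M
      ((MvPolynomial.monomial ν) c)) with hT
  have hTx : T x = (MvPolynomial.monomial ν c) • x := rfl
  rw [← hTx]
  have : T x ∈ Submodule.map T (Submodule.span K
      {y : M | ∃ h d μ, h ∈ H ∧ h ∈ ℳ d ∧ μ + d = e' ∧
        y = (MvPolynomial.monomial μ (1:K)) • h}) :=
    Submodule.mem_map_of_mem hx
  rw [Submodule.map_span] at this
  refine Submodule.span_le.2 ?_ this
  rintro _ ⟨y, ⟨h, d, μ, hH, hd, hμ, rfl⟩, rfl⟩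
  have : T ((MvPolynomial.monomial μ (1:K)) • h)
      = c • ((MvPolynomial.monomial (ν + μ) (1:K)) • h) := by
    show (MvPolynomial.monomial ν c) • ((MvPolynomial.monomial μ (1:K)) • h) = _
    rw [smul_smul, MvPolynomial.monomial_mul, mul_one, monomial_smul_eq]
  rw [this]
  refine Submodule.smul_mem _ _ (Submodule.subset_span ?_)
  exact ⟨h, d, ν + μ, hH, hd, by rw [add_assoc, hμ], rfl⟩

/-- MAIN SPAN LEMMA: projections of an `S`-span of homogeneous elements. -/
lemma proj_span_mem (H : Set M) (hH : ∀ h ∈ H, ∃ d, h ∈ ℳ d) {y : M}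
    (hy : y ∈ Submodule.span (MvPolynomial (Fin 2) K) H) :
    ∀ e, π ℳ e y ∈ Submodule.span K
      {x : M | ∃ h d μ, h ∈ H ∧ h ∈ ℳ d ∧ μ + d = e ∧
        x = (MvPolynomial.monomial μ (1:K)) • h} := by
  induction hy using Submodule.span_induction with
  | mem h hh =>
    intro e
    rcases hH h hh with ⟨d, hd⟩
    by_cases hde : d = e
    · subst hde
      rw [π_of_mem_same ℳ hd]
      apply Submodule.subset_span
      exact ⟨h, d, 0, hh, hd, zero_add d, by simp⟩
    · rw [π_of_mem_ne ℳ hd hde]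
      exact Submodule.zero_mem _
  | zero => intro e; rw [π_zero]; exact Submodule.zero_mem _
  | add x y _ _ ihx ihy => intro e; rw [π_add]; exact Submodule.add_mem _ (ihx e) (ihy e)
  | smul f y hy ih =>
    intro e
    have hf : f • y = ∑ ν ∈ f.support, (MvPolynomial.monomial ν (f.coeff ν)) • y := by
      conv_lhs => rw [f.as_sum]
      rw [Finset.sum_smul]
    rw [hf, π_sum]
    apply Submodule.sum_mem
    intro ν _
    by_cases hle : ν ≤ e
    · rw [π_monomial_smul_of_le ℳ hMgr hle]
      have := smul_genspan ℳ H ν (f.coeff ν) (e - ν) (ih (e - ν))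
      rwa [add_tsub_cancel_of_le hle] at this
    · rw [π_monomial_smul_of_not_le ℳ hMgr hle]
      exact Submodule.zero_mem _


/-- A homogeneous element of the `S`-span of a finite homogeneous family lies in the
`K`-span of the matching monomial multiples. -/
lemma homog_span_bound {ι : Type} (t : ι → M) (eDeg : ι → (Fin 2 →₀ ℕ))
    (ht : ∀ j, t j ∈ ℳ (eDeg j)) {z : M} {dz : Fin 2 →₀ ℕ} (hz : z ∈ ℳ dz)
    (hsp : z ∈ Submodule.span (MvPolynomial (Fin 2) K) (Set.range t)) :
    z ∈ Submodule.span K (Set.range (fun j => if eDeg j ≤ dz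
      then (MvPolynomial.monomial (dz - eDeg j) (1:K)) • t j else 0)) := by
  classical
  have h1 : π ℳ dz z = z := π_of_mem_same ℳ hz
  have h2 := proj_span_mem ℳ hMgr (Set.range t) (by rintro _ ⟨j, rfl⟩; exact ⟨eDeg j, ht j⟩)
    hsp dz
  rw [h1] at h2
  refine Submodule.span_le.2 ?_ h2
  rintro _ ⟨h, d, μ, ⟨j, rfl⟩, hd, hμ, rfl⟩
  by_cases hzero : t j = 0
  · rw [hzero, smul_zero]; exact Submodule.zero_mem _
  · have hdeg : d = eDeg j := by
      by_contra hne
      exact hzero (degree_unique ℳ hd (ht j) hne)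
    subst hdeg
    have hle : eDeg j ≤ dz := by rw [← hμ]; exact le_add_self
    have hμ' : μ = dz - eDeg j := by
      rw [← hμ, add_tsub_cancel_right]
    subst hμ'
    apply Submodule.subset_span
    exact ⟨j, by simp [hle]⟩

/-- The `S`-span of a set of homogeneous elements is stable under projections. -/
lemma span_homog_proj_stable (H : Set M) (hH : ∀ h ∈ H, ∃ d, h ∈ ℳ d) {y : M}
    (hy : y ∈ Submodule.span (MvPolynomial (Fin 2) K) H) (e : Fin 2 →₀ ℕ) :
    π ℳ e y ∈ Submodule.span (MvPolynomial (Fin 2) K) H := by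
  have h := proj_span_mem ℳ hMgr H hH hy e
  have hle : Submodule.span K
      {x : M | ∃ h d μ, h ∈ H ∧ h ∈ ℳ d ∧ μ + d = e ∧
        x = (MvPolynomial.monomial μ (1:K)) • h}
      ≤ (Submodule.span (MvPolynomial (Fin 2) K) H).restrictScalars K := by
    apply Submodule.span_le.2
    rintro _ ⟨h, d, μ, hH', hd, hμ, rfl⟩
    exact Submodule.smul_mem _ _ (Submodule.subset_span hH')
  exact hle h

/-- The kernel of multiplication by a monomial is stable under projections. -/
lemma ker_monomial_proj_stable (w : Fin 2 →₀ ℕ) {m : M}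
    (hm : (MvPolynomial.monomial w (1:K)) • m = 0) (d : Fin 2 →₀ ℕ) :
    (MvPolynomial.monomial w (1:K)) • π ℳ d m = 0 := by
  have hle : w ≤ w + d := le_self_add
  have h := π_monomial_smul_of_le ℳ hMgr (e := w + d) hle (1:K) m
  rw [hm, π_zero, add_tsub_cancel_left] at h
  exact h.symm

/-- Finitely generated projection-stable submodules have a finite homogeneous
generating family. -/
lemma exists_homog_generators (N : Submodule (MvPolynomial (Fin 2) K) M)
    (hstable : ∀ m ∈ N, ∀ d, π ℳ d m ∈ N) (hfg : N.FG) :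
    ∃ (ι : Type) (_ : Fintype ι) (t : ι → M) (e : ι → (Fin 2 →₀ ℕ)),
      (∀ j, t j ∈ ℳ (e j)) ∧ (∀ j, t j ∈ N) ∧
      Submodule.span (MvPolynomial (Fin 2) K) (Set.range t) = N := by
  classical
  obtain ⟨n, s, hs⟩ := Submodule.fg_iff_exists_fin_generating_family.1 hfg
  refine ⟨Σ i : Fin n, ↥((DirectSum.decompose ℳ (s i)).support),
    inferInstance, fun p => π ℳ p.2.1 (s p.1), fun p => p.2.1, fun p => π_mem ℳ _ _, ?_, ?_⟩
  · intro p
    exact hstable (s p.1) (hs ▸ Submodule.subset_span ⟨p.1, rfl⟩) p.2.1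
  · apply le_antisymm
    · apply Submodule.span_le.2
      rintro _ ⟨p, rfl⟩
      exact hstable (s p.1) (hs ▸ Submodule.subset_span ⟨p.1, rfl⟩) p.2.1
    · rw [← hs]
      apply Submodule.span_le.2
      rintro _ ⟨i, rfl⟩
      have : s i = ∑ d ∈ (DirectSum.decompose ℳ (s i)).support, π ℳ d (s i) :=
        (DirectSum.sum_support_decompose ℳ (s i)).symm
      rw [this, ← Finset.sum_attach ((DirectSum.decompose ℳ (s i)).support)
        (fun d => π ℳ d (s i))]
      apply Submodule.sum_mem
      intro d _
      exact Submodule.subset_span ⟨⟨i, d⟩, rfl⟩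

end Grading


section Main

variable {K : Type} [Field K] {M : Type} [AddCommGroup M]
  [Module (MvPolynomial (Fin 2) K) M] [Module K M]
  [IsScalarTower K (MvPolynomial (Fin 2) K) M]
  (ℳ : (Fin 2 →₀ ℕ) → Submodule K M)
  [DirectSum.Decomposition ℳ]

local notation "S'" => MvPolynomial (Fin 2) K
local notation "Q'" => FractionRing (MvPolynomial (Fin 2) K)

lemma ksmul_mem (F : Submodule S' M) (c : K) {v : M} (hv : v ∈ F) : c • v ∈ F := by
  rw [← algebraMap_smul S' c v]
  exact F.smul_mem _ hv

lemma smul_comm_CS (c : K) (f : S') (m : M) : f • (c • m) = c • (f • m) := by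
  rw [← algebraMap_smul S' c m, ← algebraMap_smul S' c (f • m), smul_smul, smul_smul, mul_comm]

set_option maxHeartbeats 2000000 in
lemma part2 [Module.Finite S' M]
    (hMgr : ∀ (u v : Fin 2 →₀ ℕ) (c : K) (m : M), m ∈ ℳ v →
      (MvPolynomial.monomial u c) • m ∈ ℳ (u + v)) :
    ∃ N : ℕ, ∀ d : Fin 2 →₀ ℕ, (∀ i, N ≤ d i) →
      Module.finrank K (ℳ d) = Module.finrank Q' (TensorProduct S' Q' M) := by
  classical
  set ℓ : M →ₗ[S'] TensorProduct S' Q' M := TensorProduct.mk S' Q' M 1 with hℓdef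
  haveI : IsLocalizedModule (nonZeroDivisors S') ℓ :=
    (isLocalizedModule_iff_isBaseChange (nonZeroDivisors S') Q' ℓ).mpr
      (TensorProduct.isBaseChange S' M Q')
  -- homogeneous elements have image spanning `Q' ⊗ M` over `Q'`
  have hℓhom : ∀ m : M, ℓ m ∈ Submodule.span Q' (ℓ '' {m : M | ∃ d, m ∈ ℳ d}) := by
    intro m
    obtain ⟨D, hD⟩ := sum_π ℳ m
    rw [← hD, map_sum]
    exact Submodule.sum_mem _ (fun d _ => Submodule.subset_span ⟨π ℳ d m, ⟨d, π_mem ℳ d m⟩, rfl⟩)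
  have hspan : Submodule.span Q' (ℓ '' {m : M | ∃ d, m ∈ ℳ d}) = ⊤ := by
    rw [eq_top_iff]
    intro z hzt
    clear hzt
    have hz : z ∈ Submodule.span S' {t : TensorProduct S' Q' M | ∃ m n, m ⊗ₜ n = t} := by
      rw [TensorProduct.span_tmul_eq_top]; trivial
    induction hz using Submodule.span_induction with
    | mem x hx =>
      obtain ⟨q, m, rfl⟩ := hx
      have : q ⊗ₜ[MvPolynomial (Fin 2) K] m = q • (ℓ m) := by
        show _ = q • ((1 : Q') ⊗ₜ[MvPolynomial (Fin 2) K] m)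
        rw [TensorProduct.smul_tmul', smul_eq_mul, mul_one]
      rw [this]
      exact Submodule.smul_mem _ _ (hℓhom m)
    | zero => exact Submodule.zero_mem _
    | add x y _ _ hx hy => exact Submodule.add_mem _ hx hy
    | smul f x _ hx =>
      rw [← algebraMap_smul Q' f x]
      exact Submodule.smul_mem _ _ hx
  obtain ⟨b, hbsub, hbspan, hbli⟩ :=
    exists_linearIndependent Q' (ℓ '' {m : M | ∃ d, m ∈ ℳ d})
  rw [hspan] at hbspan
  have hbfin : b.Finite := hbli.setFinite
  haveI := hbfin.fintype
  let B : Module.Basis b Q' (TensorProduct S' Q' M) :=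
    Module.Basis.mk hbli (by rw [Subtype.range_coe, hbspan])
  have hcard : Module.finrank Q' (TensorProduct S' Q' M) = Fintype.card b :=
    Module.finrank_eq_card_basis B
  -- homogeneous representatives
  have hrep : ∀ x : b, ∃ (m : M) (d : Fin 2 →₀ ℕ), m ∈ ℳ d ∧ ℓ m = (x : TensorProduct S' Q' M) := by
    intro x
    rcases hbsub x.2 with ⟨m, ⟨d, hd⟩, hm⟩
    exact ⟨m, d, hd, hm⟩
  choose mrep drep hdrep hℓrep using hrep
  -- S-linear independence of the representatives
  have hliS : LinearIndependent S' mrep := by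
    have h1 : LinearIndependent S' (fun x : b => (x : TensorProduct S' Q' M)) := by
      apply hbli.restrict_scalars
      intro a a' haa
      apply IsFractionRing.injective S' Q'
      simpa [Algebra.algebraMap_eq_smul_one] using haa
    apply LinearIndependent.of_comp ℓ
    have h2 : (⇑ℓ) ∘ mrep = fun x : b => (x : TensorProduct S' Q' M) := funext fun x => hℓrep x
    rw [h2]
    exact h1
  set F : Submodule S' M := Submodule.span S' (Set.range mrep) with hFdef
  -- denominators
  have hgs : ∀ g : M, ∃ s : S', s ∈ nonZeroDivisors S' ∧ s • g ∈ F := by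
    intro g
    obtain ⟨den, hden⟩ := IsLocalization.exist_integer_multiples_of_finite
      (nonZeroDivisors S') (fun x : b => B.repr (ℓ g) x)
    choose num hnum using hden
    have hBx : ∀ x : b, (B x : TensorProduct S' Q' M) = ℓ (mrep x) := by
      intro x
      rw [Module.Basis.mk_apply]
      exact (hℓrep x).symm
    have h1 : ℓ ((den : S') • g) = ℓ (∑ x : b, num x • mrep x) := by
      rw [map_smul, map_sum]
      conv_lhs => rw [← B.sum_repr (ℓ g)]
      rw [Finset.smul_sum]
      apply Finset.sum_congr rfl
      intro x _
      rw [map_smul, ← smul_assoc, ← hnum x, algebraMap_smul, hBx x]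
    have h2 : ℓ ((den : S') • g - ∑ x : b, num x • mrep x) = 0 := by
      rw [map_sub, h1, sub_self]
    obtain ⟨cd, hcd⟩ :=
      (IsLocalizedModule.eq_zero_iff (S := nonZeroDivisors S') (f := ℓ)).1 h2
    refine ⟨(cd : S') * (den : S'), mul_mem cd.2 den.2, ?_⟩
    rw [Submonoid.smul_def, smul_sub, sub_eq_zero] at hcd
    rw [mul_smul]
    rw [hcd]
    apply Submodule.smul_mem
    apply Submodule.sum_mem
    intro x _
    exact Submodule.smul_mem _ _ (Submodule.subset_span ⟨x, rfl⟩)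
  choose sg hsg1 hsg2 using hgs
  obtain ⟨G, hG⟩ := Module.Finite.fg_top (R := S') (M := M)
  set s : S' := ∏ g ∈ G, sg g with hsdef
  have hs0 : s ∈ nonZeroDivisors S' := Submonoid.prod_mem _ (fun g _ => hsg1 g)
  have hsF : ∀ m : M, s • m ∈ F := by
    intro m
    have hmem : m ∈ Submodule.span S' (G : Set M) := by rw [hG]; trivial
    have hle : Submodule.span S' (G : Set M) ≤ F.comap (LinearMap.lsmul S' M s) := by
      apply Submodule.span_le.2
      intro g hg
      show g ∈ F.comap (LinearMap.lsmul S' M s)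
      rw [Submodule.mem_comap, LinearMap.lsmul_apply, hsdef,
        ← Finset.mul_prod_erase G sg hg, mul_comm, mul_smul]
      exact Submodule.smul_mem F _ (hsg2 g)
    exact hle hmem
  have hsne : s ≠ 0 := nonZeroDivisors.ne_zero hs0
  obtain ⟨w, hw⟩ := MvPolynomial.support_nonempty.2 hsne
  have hcw : MvPolynomial.coeff w s ≠ 0 := MvPolynomial.mem_support_iff.1 hw
  -- monomial multiples of homogeneous elements land in F
  have hwF : ∀ (d : Fin 2 →₀ ℕ) (m : M), m ∈ ℳ d → (MvPolynomial.monomial w (1:K)) • m ∈ F := by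
    intro d m hm
    have h1 : π ℳ (w + d) (s • m) ∈ F := by
      exact span_homog_proj_stable ℳ hMgr (Set.range mrep)
        (by rintro _ ⟨x, rfl⟩; exact ⟨drep x, hdrep x⟩) (hsF m) (w + d)
    have h2 : π ℳ (w + d) (s • m) =
        (MvPolynomial.coeff w s) • ((MvPolynomial.monomial w (1:K)) • m) := by
      conv_lhs => rw [MvPolynomial.as_sum s]
      rw [Finset.sum_smul, π_sum]
      have hterm : ∀ ν ∈ s.support,
          π ℳ (w+d) ((MvPolynomial.monomial ν (MvPolynomial.coeff ν s)) • m)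
          = if ν = w then (MvPolynomial.coeff w s) • ((MvPolynomial.monomial w (1:K)) • m)
            else 0 := by
        intro ν hν
        by_cases hνw : ν = w
        · subst hνw
          rw [if_pos rfl, π_monomial_smul_of_le ℳ hMgr le_self_add, add_tsub_cancel_left,
            π_of_mem_same ℳ hm, monomial_smul_eq]
        · rw [if_neg hνw]
          by_cases hle : ν ≤ w + d
          · rw [π_monomial_smul_of_le ℳ hMgr hle]
            have hne : w + d - ν ≠ d := by
              intro hc
              apply hνw
              have h3 := add_tsub_cancel_of_le hle
              rw [hc] at h3
              exact add_right_cancel h3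
            rw [π_of_mem_ne ℳ hm (Ne.symm hne), smul_zero]
          · exact π_monomial_smul_of_not_le ℳ hMgr hle _ _
      rw [Finset.sum_congr rfl hterm, Finset.sum_ite_eq' s.support w, if_pos hw]
    rw [h2] at h1
    have h3 := ksmul_mem F (MvPolynomial.coeff w s)⁻¹ h1
    rwa [inv_smul_smul₀ hcw] at h3
  -- the torsion kernel
  set Tker := LinearMap.ker (LinearMap.lsmul S' M (MvPolynomial.monomial w (1:K))) with hTdef
  have hTfg : Tker.FG := IsNoetherian.noetherian Tker
  have hTstable : ∀ m ∈ Tker, ∀ d, π ℳ d m ∈ Tker := by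
    intro m hm d
    rw [hTdef, LinearMap.mem_ker, LinearMap.lsmul_apply] at hm ⊢
    exact ker_monomial_proj_stable ℳ hMgr w hm d
  obtain ⟨ιT, hιT, t, eT, htdeg, htker, htspan⟩ :=
    exists_homog_generators ℳ hMgr Tker hTstable hTfg
  haveI := hιT
  -- the degree bound
  set Dbnd : ℕ := (Finset.univ.sup (fun x : b => (drep x) 0 ⊔ (drep x) 1)) ⊔
    (Finset.univ.sup (fun j : ιT => (eT j) 0 ⊔ (eT j) 1)) ⊔ ((w 0) ⊔ (w 1)) with hDdef
  refine ⟨2 * Dbnd + 1, ?_⟩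
  intro d hd
  have hd0 : 2 * Dbnd + 1 ≤ d 0 := hd 0
  have hd1 : 2 * Dbnd + 1 ≤ d 1 := hd 1
  have hwbnd : (w 0) ⊔ (w 1) ≤ Dbnd := by
    rw [hDdef]
    exact le_sup_right
  have hdrep_le : ∀ x : b, drep x ≤ d := by
    intro x
    have h1 : (drep x) 0 ⊔ (drep x) 1 ≤ Dbnd := by
      rw [hDdef]
      refine le_trans ?_ (le_trans le_sup_left le_sup_left)
      exact Finset.le_sup (f := fun x : b => (drep x) 0 ⊔ (drep x) 1) (Finset.mem_univ x)
    rw [Finsupp.le_def]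
    intro i
    fin_cases i
    · simp only [Fin.zero_eta, Fin.isValue]; omega
    · simp only [Fin.mk_one, Fin.isValue]; omega
  have heT_le : ∀ j : ιT, eT j + w ≤ d := by
    intro j
    have h1 : (eT j) 0 ⊔ (eT j) 1 ≤ Dbnd := by
      rw [hDdef]
      refine le_trans ?_ (le_trans le_sup_right le_sup_left)
      exact Finset.le_sup (f := fun j : ιT => (eT j) 0 ⊔ (eT j) 1) (Finset.mem_univ j)
    rw [Finsupp.le_def]
    intro i
    rw [Finsupp.add_apply]
    fin_cases i
    · simp only [Fin.zero_eta, Fin.isValue]; omega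
    · simp only [Fin.mk_one, Fin.isValue]; omega
  -- (a) no torsion in degree d
  have hvanish : ∀ m : M, m ∈ ℳ d → (MvPolynomial.monomial w (1:K)) • m = 0 → m = 0 := by
    intro m hm h0
    have hmT : m ∈ Submodule.span S' (Set.range t) := by
      rw [htspan, hTdef, LinearMap.mem_ker, LinearMap.lsmul_apply]
      exact h0
    have hb2 := homog_span_bound ℳ hMgr t eT htdeg hm hmT
    have hzero : ∀ j : ιT,
        (if eT j ≤ d then (MvPolynomial.monomial (d - eT j) (1:K)) • t j else 0) = 0 := by
      intro j
      by_cases hle : eT j ≤ d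
      · rw [if_pos hle]
        have hwle : w ≤ d - eT j := le_tsub_of_add_le_left (heT_le j)
        have hsplit : (d - eT j - w) + w = d - eT j := tsub_add_cancel_of_le hwle
        have hmul : (MvPolynomial.monomial (d - eT j) (1:K))
            = MvPolynomial.monomial (d - eT j - w) (1:K) * MvPolynomial.monomial w 1 := by
          rw [MvPolynomial.monomial_mul, one_mul, hsplit]
        have htj : (MvPolynomial.monomial w (1:K)) • t j = 0 := by
          have h4 := htker j
          rw [hTdef, LinearMap.mem_ker, LinearMap.lsmul_apply] at h4
          exact h4
        rw [hmul, mul_smul, htj, smul_zero]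
      · rw [if_neg hle]
    have : m ∈ (⊥ : Submodule K M) := by
      refine Submodule.span_le.2 ?_ hb2
      rintro _ ⟨j, rfl⟩
      simp only [hzero j]
      exact Submodule.zero_mem ⊥
    simpa using this
  -- (b) upper bound
  have hub : FiniteDimensional K (ℳ d) ∧ Module.finrank K (ℳ d) ≤ Fintype.card b := by
    set gF : b → M := fun x => if drep x ≤ w + d
      then (MvPolynomial.monomial ((w + d) - drep x) (1:K)) • mrep x else 0 with hgF
    set W := Submodule.span K (Set.range gF) with hWdef
    haveI : FiniteDimensional K W := FiniteDimensional.span_of_finite K (Set.finite_range gF)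
    have hψmem : ∀ m : ℳ d, (MvPolynomial.monomial w (1:K)) • (m : M) ∈ W :=
      fun m => homog_span_bound ℳ hMgr mrep drep hdrep (hMgr w d 1 m.1 m.2) (hwF d m.1 m.2)
    set ψ : (ℳ d) →ₗ[K] W :=
      { toFun := fun m => ⟨(MvPolynomial.monomial w (1:K)) • (m : M), hψmem m⟩
        map_add' := by
          intro m m'
          apply Subtype.ext
          simp [smul_add]
        map_smul' := by
          intro c m
          apply Subtype.ext
          simp [smul_comm_CS] } with hψ
    have hψinj : Function.Injective ψ := by
      rw [← LinearMap.ker_eq_bot, Submodule.eq_bot_iff]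
      intro m hm
      rw [LinearMap.mem_ker] at hm
      have h5 : (MvPolynomial.monomial w (1:K)) • (m : M) = 0 := congrArg Subtype.val hm
      exact Subtype.ext (hvanish m.1 m.2 h5)
    haveI hfd : FiniteDimensional K (ℳ d) := FiniteDimensional.of_injective ψ hψinj
    refine ⟨hfd, le_trans (LinearMap.finrank_le_finrank_of_injective hψinj) ?_⟩
    have h6 : Module.finrank K W ≤ (Set.range gF).toFinset.card := finrank_span_le_card _
    rw [Set.toFinset_card] at h6
    exact le_trans h6 (Fintype.card_range_le gF)
  obtain ⟨hfd, hub⟩ := hub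
  -- (c) lower bound
  have hlb : Fintype.card b ≤ Module.finrank K (ℳ d) := by
    have hvmem : ∀ x : b, (MvPolynomial.monomial (d - drep x) (1:K)) • mrep x ∈ ℳ d := by
      intro x
      have h7 := hMgr (d - drep x) (drep x) 1 (mrep x) (hdrep x)
      rwa [tsub_add_cancel_of_le (hdrep_le x)] at h7
    set v : b → (ℳ d) := fun x => ⟨_, hvmem x⟩ with hv
    have hli : LinearIndependent K v := by
      rw [Fintype.linearIndependent_iff]
      intro g hg x
      have hM0 : ∑ x : b, (MvPolynomial.monomial (d - drep x) (g x)) • mrep x = 0 := by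
        have h8 := congrArg (Subtype.val) hg
        simp only [AddSubmonoidClass.coe_finset_sum, SetLike.val_smul,
          ZeroMemClass.coe_zero, hv] at h8
        rw [← h8]
        apply Finset.sum_congr rfl
        intro y _
        rw [monomial_smul_eq]
      have h9 := Fintype.linearIndependent_iff.1 hliS
        (fun x => MvPolynomial.monomial (d - drep x) (g x)) hM0 x
      simpa [MvPolynomial.monomial_eq_zero] using h9
    have h10 := hli.fintype_card_le_finrank
    simpa using h10
  rw [hcard]
  omega

end Main


lemma fs_self_apply (n : ℕ) (i : Fin 2) : fs n n i = n := by
  fin_cases i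
  · simp
  · simp

end St5

/-!
STATEMENT 5: Let `M` be a finitely generated ℕ²-graded module over `S = K[x_1,x_2]`.
Suppose `HS(M,t) = c·t_1^{m_1}t_2^{m_2}/((1−t_1)(1−t_2)) + Σ_{i<m_1} α_i t_1^i/(1−t_2)
+ Σ_{j<m_2} β_j t_2^j/(1−t_1) + R(t_1,t_2)` as formal power series (the identity is
stated with the denominators cleared, i.e. multiplied through by `(1−t_1)(1−t_2)`,
which is a unit in `ℤ[[t_1,t_2]]`).  Then `c = rk_S(M)`.
-/

theorem statement5 (K : Type) [Field K]
    (M : Type) [AddCommGroup M] [Module (MvPolynomial (Fin 2) K) M]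
    [Module K M] [IsScalarTower K (MvPolynomial (Fin 2) K) M]
    [Module.Finite (MvPolynomial (Fin 2) K) M]
    (ℳ : (Fin 2 →₀ ℕ) → Submodule K M)
    (hM : DirectSum.IsInternal ℳ)
    (hMgr : ∀ (u v : Fin 2 →₀ ℕ) (c : K) (m : M), m ∈ ℳ v →
      (MvPolynomial.monomial u c) • m ∈ ℳ (u + v))
    -- `HS` is the multigraded Hilbert series of `M`
    (HS : MvPowerSeries (Fin 2) ℤ)
    (hHS : ∀ u : Fin 2 →₀ ℕ, MvPowerSeries.coeff (R := ℤ) u HS = (Module.finrank K (ℳ u) : ℤ))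
    (m₁ m₂ : ℕ) (c : ℤ) (α β : ℕ → ℤ) (R : MvPolynomial (Fin 2) ℤ)
    (heq : (1 - MvPowerSeries.X 0) * (1 - MvPowerSeries.X 1) * HS =
        MvPowerSeries.C (σ := Fin 2) (R := ℤ) c * (MvPowerSeries.X 0) ^ m₁ * (MvPowerSeries.X 1) ^ m₂
      + (1 - MvPowerSeries.X 0) *
          (∑ i ∈ Finset.range m₁, MvPowerSeries.C (σ := Fin 2) (R := ℤ) (α i) * (MvPowerSeries.X 0) ^ i)
      + (1 - MvPowerSeries.X 1) *
          (∑ j ∈ Finset.range m₂, MvPowerSeries.C (σ := Fin 2) (R := ℤ) (β j) * (MvPowerSeries.X 1) ^ j)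
      + (1 - MvPowerSeries.X 0) * (1 - MvPowerSeries.X 1) * (R : MvPowerSeries (Fin 2) ℤ)) :
    c = (rk (MvPolynomial (Fin 2) K) M : ℤ) := by
  classical
  letI : DirectSum.Decomposition ℳ := hM.chooseDecomposition
  obtain ⟨N₂, hN₂⟩ := St5.part2 ℳ hMgr
  set n : ℕ := m₁ + m₂ + R.totalDegree + N₂ + 1 with hn
  have h1 : MvPowerSeries.coeff (R := ℤ) (St5.fs n n) HS = c :=
    St5.part1 HS m₁ m₂ c α β R heq n n (by omega) (by omega) (by omega) (by omega)
  have h2 : Module.finrank K (ℳ (St5.fs n n)) = rk (MvPolynomial (Fin 2) K) M := by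
    have h3 := hN₂ (St5.fs n n) (by
      intro i
      rw [St5.fs_self_apply]
      omega)
    exact h3
  calc c = MvPowerSeries.coeff (R := ℤ) (St5.fs n n) HS := h1.symm
    _ = (Module.finrank K (ℳ (St5.fs n n)) : ℤ) := hHS _
    _ = (rk (MvPolynomial (Fin 2) K) M : ℤ) := by rw [h2]
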